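/- Let K be an integral domain of prime characteristic c and r ≥ 0. The functions ρ_0, ..., ρ_{c^r - 1} (reduced mod c into K) form a basis of the K-module of all functions f : ℤ≥0 → K that are periodic with period c^r. -/

import Mathlib

open Finset Matrix

private lemma pv_aux (i k n : ℕ) (hi : i < n) :
    ∑ j ∈ Finset.range n, i.choose j * k.choose j = (i + k).choose i := by
  have h : (i + k).choose i = ∑ j ∈ Finset.range (i + 1), i.choose j * k.choose j := by
    rw [add_comm i k, Nat.add_choose_eq, Finset.Nat.sum_antidiagonal_eq_sum_range_succ_mk]
    refine Finset.sum_congr rfl fun j hj => ?_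
    rw [Finset.mem_range, Nat.lt_succ_iff] at hj
    rw [Nat.choose_symm hj, mul_comm]
  rw [h]
  refine (Finset.sum_subset (Finset.range_subset_range.mpr hi) fun x _ hx => ?_).symm
  rw [Finset.mem_range, Nat.lt_succ_iff, not_le] at hx
  rw [Nat.choose_eq_zero_of_lt hx, zero_mul]

private lemma key_modEq (c : ℕ) (hc : c.Prime) (r m N : ℕ) (hm : m < c ^ r) :
    (N + c ^ r).choose m ≡ N.choose m [MOD c] := by
  haveI : Fact c.Prime := ⟨hc⟩
  have h1 := Choose.choose_modEq_choose_mul_prod_range_choose (p := c) (n := N + c ^ r) (k := m) r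
  have h2 := Choose.choose_modEq_choose_mul_prod_range_choose (p := c) (n := N) (k := m) r
  have hm0 : m / c ^ r = 0 := Nat.div_eq_of_lt hm
  have hdig : ∀ i ∈ Finset.range r, (N + c ^ r) / c ^ i % c = N / c ^ i % c := by
    intro i hi
    rw [Finset.mem_range] at hi
    have h : c ^ r = c ^ i * (c ^ (r - i - 1) * c) := by
      rw [← pow_succ, ← pow_add]
      congr 1
      omega
    rw [h, Nat.add_mul_div_left _ _ (pow_pos hc.pos i), Nat.add_mul_mod_self_right]
  have hRHS : ((N + c ^ r) / c ^ r).choose (m / c ^ r) *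
        ∏ i ∈ Finset.range r, ((N + c ^ r) / c ^ i % c).choose (m / c ^ i % c)
      = (N / c ^ r).choose (m / c ^ r) *
        ∏ i ∈ Finset.range r, (N / c ^ i % c).choose (m / c ^ i % c) := by
    rw [hm0]
    simp only [Nat.choose_zero_right, one_mul]
    exact Finset.prod_congr rfl fun i hi => by rw [hdig i hi]
  have h1' : (N + c ^ r).choose m ≡ ((N + c ^ r) / c ^ r).choose (m / c ^ r) *
      ∏ i ∈ Finset.range r, ((N + c ^ r) / c ^ i % c).choose (m / c ^ i % c) [MOD c] := by
    rw [← Int.natCast_modEq_iff]; exact_mod_cast h1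
  have h2' : N.choose m ≡ (N / c ^ r).choose (m / c ^ r) *
      ∏ i ∈ Finset.range r, (N / c ^ i % c).choose (m / c ^ i % c) [MOD c] := by
    rw [← Int.natCast_modEq_iff]; exact_mod_cast h2
  rw [hRHS] at h1'
  exact h1'.trans h2'.symm

/-- Over an integral domain `K` of prime characteristic `c`, the basic sum-functions
`ρ_0, …, ρ_{c^r-1}` (with `ρ_m(k)` the image in `K` of `C(m+k, m)`) form a basis of
the `K`-module of functions `ℕ → K` of period `c^r`: they are linearly independent,
and their span is exactly the set of such periodic functions. -/
theorem stmt_14 (K : Type*) [CommRing K] [IsDomain K] (c : ℕ) (hc : c.Prime)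
    [CharP K c] (r : ℕ) :
    LinearIndependent K
      (fun m : Fin (c ^ r) => fun k : ℕ => ((((m : ℕ) + k).choose (m : ℕ) : ℕ) : K)) ∧
    ∀ f : ℕ → K,
      (∀ k : ℕ, f (k + c ^ r) = f k) ↔
        f ∈ Submodule.span K
          (Set.range fun m : Fin (c ^ r) =>
            fun k : ℕ => ((((m : ℕ) + k).choose (m : ℕ) : ℕ) : K)) := by
  set n := c ^ r with hn
  have hnpos : 0 < n := pow_pos hc.pos r
  set v : Fin n → ℕ → K := fun m k => (((m : ℕ) + k).choose (m : ℕ) : K) with hv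
  -- periodicity of the generators
  have hper : ∀ m : Fin n, ∀ k : ℕ, v m (k + n) = v m k := by
    intro m k
    have := key_modEq c hc r (m : ℕ) ((m : ℕ) + k) m.2
    have h' : ((m : ℕ) + (k + n)) = ((m : ℕ) + k) + c ^ r := by omega
    simp only [hv, h']
    exact CharP.natCast_eq_natCast' K c this
  -- the Pascal matrices
  set L : Matrix (Fin n) (Fin n) K := fun i j => ((i : ℕ).choose (j : ℕ) : K) with hL
  set M : Matrix (Fin n) (Fin n) K := fun i j => (((i : ℕ) + (j : ℕ)).choose (i : ℕ) : K) with hM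
  have hML : M = L * Lᵀ := by
    ext i j
    have h := pv_aux (i : ℕ) (j : ℕ) n i.2
    rw [Matrix.mul_apply]
    simp only [hM, hL, Matrix.transpose_apply]
    rw [← h]
    push_cast
    rw [Finset.sum_range]
    rfl
  have hLdet : L.det = 1 := by
    have htri : L.BlockTriangular OrderDual.toDual := by
      intro i j hij
      have : (i : ℕ) < (j : ℕ) := hij
      simp [hL, Nat.choose_eq_zero_of_lt this]
    rw [Matrix.det_of_lowerTriangular L htri]
    simp [hL]
  have hMdet : M.det = 1 := by
    rw [hML, Matrix.det_mul, Matrix.det_transpose, hLdet, mul_one]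
  have hMunit : IsUnit M.det := by rw [hMdet]; exact isUnit_one
  have hMM : M * M⁻¹ = 1 := Matrix.mul_nonsing_inv M hMunit
  have hMM' : M⁻¹ * M = 1 := Matrix.nonsing_inv_mul M hMunit
  -- linear independence
  have hli : LinearIndependent K v := by
    rw [Fintype.linearIndependent_iff]
    intro g hg i
    have hrow : g ᵥ* M = 0 := by
      funext j
      have h1 := congrFun hg (j : ℕ)
      simp only [Finset.sum_apply, Pi.smul_apply, Pi.zero_apply, smul_eq_mul] at h1
      simpa [Matrix.vecMul, dotProduct, hM, hv] using h1
    have : g = 0 := by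
      calc g = g ᵥ* 1 := by rw [Matrix.vecMul_one]
        _ = g ᵥ* (M * M⁻¹) := by rw [hMM]
        _ = (g ᵥ* M) ᵥ* M⁻¹ := by rw [Matrix.vecMul_vecMul]
        _ = (0 : Fin n → K) ᵥ* M⁻¹ := by rw [hrow]
        _ = 0 := Matrix.zero_vecMul _
    exact congrFun this i
  refine ⟨hli, fun f => ⟨fun hf => ?_, fun hf => ?_⟩⟩
  · -- periodic → in span
    set y : Fin n → K := fun j => f (j : ℕ) with hy
    set a : Fin n → K := y ᵥ* M⁻¹ with ha
    have haM : a ᵥ* M = y := by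
      rw [ha, Matrix.vecMul_vecMul, hMM', Matrix.vecMul_one]
    set g : ℕ → K := fun k => ∑ m : Fin n, a m * v m k with hgdef
    have hg_mem : g ∈ Submodule.span K (Set.range v) := by
      have hgeq : g = ∑ m : Fin n, a m • v m := by
        funext k
        simp [hgdef, Finset.sum_apply]
      rw [hgeq]
      exact Submodule.sum_mem _ fun m _ =>
        Submodule.smul_mem _ _ (Submodule.subset_span ⟨m, rfl⟩)
    have hgper : ∀ k, g (k + n) = g k := by
      intro k
      simp only [hgdef]
      exact Finset.sum_congr rfl fun m _ => by rw [hper]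
    have hfg : f = g := by
      funext k
      induction k using Nat.strong_induction_on with
      | _ k ih =>
        by_cases hk : k < n
        · have h1 : f k = y ⟨k, hk⟩ := rfl
          have h2 : g k = (a ᵥ* M) ⟨k, hk⟩ := by
            simp [hgdef, Matrix.vecMul, dotProduct, hM, hv]
          rw [h1, h2, haM]
        · push_neg at hk
          have hk' : k - n + n = k := by omega
          have h1 : f k = f (k - n) := by have := hf (k - n); rwa [hk'] at this
          have h2 : g k = g (k - n) := by have := hgper (k - n); rwa [hk'] at this
          rw [h1, h2]
          exact ih (k - n) (by omega)
    rw [hfg]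
    exact hg_mem
  · -- in span → periodic
    set P : Submodule K (ℕ → K) :=
      { carrier := {f : ℕ → K | ∀ k, f (k + n) = f k}
        zero_mem' := fun k => rfl
        add_mem' := by
          intro f g hfp hgp k
          simp [hfp k, hgp k]
        smul_mem' := by
          intro t f hfp k
          simp [hfp k] } with hP
    have hspan : Submodule.span K (Set.range v) ≤ P := by
      rw [Submodule.span_le]
      rintro x ⟨m, rfl⟩
      exact hper m
    exact hspan hf
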